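/- In the k-rung ladder, the number of spanning subgraphs consisting of two vertex-disjoint paths, one with endpoints u_1 and v_1 and the other with endpoints u_k and v_k, which together cover all 2k vertices, equals k-1; each such pair of paths uses exactly two consecutive rungs u_j v_j and u_{j+1} v_{j+1}. -/

import Mathlib

/-- The `k`-rung ladder `P_k □ K₂`.  The vertex `(j, false)` is `u_{j+1}` and `(j, true)`
is `v_{j+1}`: rail edges join consecutive vertices on the same rail, and rung edges join
`u_i` to `v_i`. -/
def Ladder (k : ℕ) : SimpleGraph (Fin k × Bool) :=
  SimpleGraph.fromRel (fun p q =>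
    (p.2 = q.2 ∧ (p.1 : ℕ) + 1 = (q.1 : ℕ)) ∨
    (p.1 = q.1 ∧ p.2 = false ∧ q.2 = true))

/-- `H` is a spanning subgraph of the `k`-rung ladder consisting of two vertex-disjoint
paths, one with endpoints `u_1, v_1` and the other with endpoints `u_k, v_k`, which
together cover all vertices. -/
def IsTwoPathDecomposition (k : ℕ) (hk : 0 < k) (H : SimpleGraph (Fin k × Bool)) : Prop :=
  H ≤ Ladder k ∧
  ∃ (p : H.Walk (⟨0, hk⟩, false) (⟨0, hk⟩, true))
    (q : H.Walk (⟨k - 1, Nat.sub_lt hk one_pos⟩, false)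
                (⟨k - 1, Nat.sub_lt hk one_pos⟩, true)),
      p.IsPath ∧ q.IsPath ∧
      (∀ x : Fin k × Bool, x ∈ p.support ↔ x ∉ q.support) ∧
      H.edgeSet = {e | e ∈ p.edges} ∪ {e | e ∈ q.edges}

open SimpleGraph

variable {k : ℕ}

lemma ladder_adj {p q : Fin k × Bool} :
    (Ladder k).Adj p q ↔
      ((p.2 = q.2 ∧ ((p.1:ℕ)+1 = (q.1:ℕ) ∨ (q.1:ℕ)+1 = (p.1:ℕ))) ∨ (p.1 = q.1 ∧ p.2 ≠ q.2)) := by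
  rw [Ladder, fromRel_adj]
  constructor
  · rintro ⟨hne, (⟨h1,h2⟩|⟨h1,h2,h3⟩)|(⟨h1,h2⟩|⟨h1,h2,h3⟩)⟩
    · exact Or.inl ⟨h1, Or.inl h2⟩
    · exact Or.inr ⟨h1, by simp [h2, h3]⟩
    · exact Or.inl ⟨h1.symm, Or.inr h2⟩
    · exact Or.inr ⟨h1.symm, by simp [h2, h3]⟩
  · rintro (⟨h1, h2⟩|⟨h1, h2⟩)
    · refine ⟨?_, ?_⟩
      · intro he; rw [he] at h2; omega
      · rcases h2 with h2|h2
        · exact Or.inl (Or.inl ⟨h1, h2⟩)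
        · exact Or.inr (Or.inl ⟨h1.symm, h2⟩)
    · refine ⟨?_, ?_⟩
      · intro he; rw [he] at h2; exact h2 rfl
      · rcases p with ⟨p1,b⟩; rcases q with ⟨q1,c⟩
        simp only at h1 h2 ⊢
        cases b <;> cases c <;> simp_all

lemma pair_eq {x : Fin k × Bool} {a : ℕ} {ha : a < k} {b : Bool} :
    x = ((⟨a,ha⟩ : Fin k), b) ↔ (x.1 : ℕ) = a ∧ x.2 = b := by
  cases x; simp [Prod.ext_iff, Fin.ext_iff]

def railE (i : ℕ) (h : i+1 < k) (b : Bool) : Sym2 (Fin k × Bool) :=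
  s(((⟨i, by omega⟩ : Fin k), b), ((⟨i+1, h⟩ : Fin k), b))

def rungE (i : ℕ) (h : i < k) : Sym2 (Fin k × Bool) :=
  s(((⟨i, h⟩ : Fin k), false), ((⟨i, h⟩ : Fin k), true))

lemma adj_rung (a : ℕ) (h : a < k) :
    (Ladder k).Adj ((⟨a,h⟩ : Fin k), false) ((⟨a,h⟩ : Fin k), true) := by
  rw [ladder_adj]; right; simp

lemma adj_railF (a : ℕ) (h : a + 1 < k) (b : Bool) :
    (Ladder k).Adj ((⟨a, by omega⟩ : Fin k), b) ((⟨a+1,h⟩ : Fin k), b) := by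
  rw [ladder_adj]; left; simp

lemma adj_railB (a : ℕ) (h : a + 1 < k) (b : Bool) :
    (Ladder k).Adj ((⟨a+1,h⟩ : Fin k), b) ((⟨a, by omega⟩ : Fin k), b) := by
  rw [ladder_adj]; left; simp

def hook : (n : ℕ) → (a : ℕ) → (h : a + n < k) →
    (Ladder k).Walk ((⟨a, by omega⟩ : Fin k), false) ((⟨a, by omega⟩ : Fin k), true)
  | 0, a, h => Walk.cons (adj_rung a (by omega)) Walk.nil
  | n+1, a, h => Walk.cons (adj_railF a (by omega) false)
      ((hook n (a+1) (by omega)).concat (adj_railB a (by omega) true))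

lemma hook_support (n : ℕ) : ∀ (a : ℕ) (h : a + n < k) (x : Fin k × Bool),
    x ∈ (hook n a h).support ↔ (a ≤ (x.1:ℕ) ∧ (x.1:ℕ) ≤ a + n) := by
  induction n with
  | zero =>
    intro a h x
    simp only [hook, Walk.support_cons, Walk.support_nil, List.mem_cons, List.not_mem_nil,
      or_false, pair_eq]
    cases hx : x.2 <;> simp [hx] <;> omega
  | succ n ih =>
    intro a h x
    simp only [hook, Walk.support_cons, Walk.support_concat, List.concat_eq_append,
      List.mem_cons, List.mem_append, List.mem_singleton, List.not_mem_nil, or_false,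
      pair_eq, ih (a+1) (by omega)]
    cases hx : x.2 <;> simp [hx] <;> omega

lemma hook_isPath (n : ℕ) : ∀ (a : ℕ) (h : a + n < k), (hook n a h).IsPath := by
  induction n with
  | zero =>
    intro a h
    rw [Walk.isPath_def]
    simp only [hook, Walk.support_cons, Walk.support_nil]
    simp [pair_eq]
  | succ n ih =>
    intro a h
    rw [Walk.isPath_def]
    simp only [hook, Walk.support_cons, Walk.support_concat, List.concat_eq_append]
    rw [List.nodup_cons, List.nodup_append]
    refine ⟨?_, (ih (a+1) (by omega)).support_nodup, List.nodup_singleton _, ?_⟩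
    · simp only [List.mem_append, List.mem_singleton, hook_support, pair_eq]
      push_neg
      refine ⟨by intro h1; omega, by simp⟩
    · intro x hx
      rw [hook_support] at hx
      simp only [List.mem_singleton, pair_eq]
      intro y ⟨h1, _⟩ hxy; subst hxy; omega

lemma hook_edges (n : ℕ) : ∀ (a : ℕ) (h : a + n < k) (e : Sym2 (Fin k × Bool)),
    e ∈ (hook n a h).edges ↔
      ((∃ (i : ℕ) (hi : i+1 < k) (b : Bool), a ≤ i ∧ i+1 ≤ a+n ∧ e = railE i hi b) ∨
       e = rungE (a+n) h) := by
  induction n with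
  | zero =>
    intro a h e
    simp only [hook, Walk.edges_cons, Walk.edges_nil, List.mem_singleton, List.not_mem_nil,
      or_false, List.mem_cons]
    constructor
    · intro he; right; exact he
    · rintro (⟨i, hi, b, h1, h2, _⟩|he)
      · omega
      · exact he
  | succ n ih =>
    intro a h e
    simp only [hook, Walk.edges_cons, Walk.edges_concat, List.concat_eq_append,
      List.mem_cons, List.mem_append, List.mem_singleton, List.not_mem_nil, or_false,
      ih (a+1) (by omega)]
    constructor
    · rintro (he|(⟨i,hi,b,h1,h2,he⟩|he)|he)
      · exact Or.inl ⟨a, by omega, false, le_refl _, by omega, he⟩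
      · exact Or.inl ⟨i, hi, b, by omega, by omega, he⟩
      · right; rw [he]; congr 1; omega
      · left; refine ⟨a, by omega, true, le_refl _, by omega, ?_⟩
        rw [he, railE, Sym2.eq_swap]
    · rintro (⟨i,hi,b,h1,h2,he⟩|he)
      · rcases Nat.eq_or_lt_of_le h1 with h1'|h1'
        · subst h1'
          cases b
          · left; rw [he]; rfl
          · right; right; rw [he, railE, Sym2.eq_swap]
        · right; left; left; exact ⟨i, hi, b, by omega, by omega, he⟩
      · right; left; right; rw [he]; congr 1; omega

lemma adj_railF' (b : ℕ) (hb : b < k) (h1 : 1 ≤ b) (bb : Bool) :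
    (Ladder k).Adj ((⟨b,hb⟩ : Fin k), bb) ((⟨b-1, by omega⟩ : Fin k), bb) := by
  rw [ladder_adj]; left; refine ⟨rfl, Or.inr ?_⟩; simp; omega

lemma adj_railB' (b : ℕ) (hb : b < k) (h1 : 1 ≤ b) (bb : Bool) :
    (Ladder k).Adj ((⟨b-1, by omega⟩ : Fin k), bb) ((⟨b,hb⟩ : Fin k), bb) := by
  rw [ladder_adj]; left; refine ⟨rfl, Or.inl ?_⟩; simp; omega

def kooh : (n : ℕ) → (b : ℕ) → (hn : n ≤ b) → (hb : b < k) →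
    (Ladder k).Walk ((⟨b, hb⟩ : Fin k), false) ((⟨b, hb⟩ : Fin k), true)
  | 0, b, _, hb => Walk.cons (adj_rung b hb) Walk.nil
  | n+1, b, hn, hb => Walk.cons (adj_railF' b hb (by omega) false)
      ((kooh n (b-1) (by omega) (by omega)).concat (adj_railB' b hb (by omega) true))

lemma kooh_support (n : ℕ) : ∀ (b : ℕ) (hn : n ≤ b) (hb : b < k) (x : Fin k × Bool),
    x ∈ (kooh n b hn hb).support ↔ (b - n ≤ (x.1:ℕ) ∧ (x.1:ℕ) ≤ b) := by
  induction n with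
  | zero =>
    intro b hn hb x
    simp only [kooh, Walk.support_cons, Walk.support_nil, List.mem_cons, List.not_mem_nil,
      or_false, pair_eq]
    cases hx : x.2 <;> simp [hx] <;> omega
  | succ n ih =>
    intro b hn hb x
    simp only [kooh, Walk.support_cons, Walk.support_concat, List.concat_eq_append,
      List.mem_cons, List.mem_append, List.mem_singleton, List.not_mem_nil, or_false,
      pair_eq, ih (b-1) (by omega) (by omega)]
    cases hx : x.2 <;> simp [hx] <;> omega

lemma kooh_isPath (n : ℕ) : ∀ (b : ℕ) (hn : n ≤ b) (hb : b < k), (kooh n b hn hb).IsPath := by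
  induction n with
  | zero =>
    intro b hn hb
    rw [Walk.isPath_def]
    simp only [kooh, Walk.support_cons, Walk.support_nil]
    simp [pair_eq]
  | succ n ih =>
    intro b hn hb
    rw [Walk.isPath_def]
    simp only [kooh, Walk.support_cons, Walk.support_concat, List.concat_eq_append]
    rw [List.nodup_cons, List.nodup_append]
    refine ⟨?_, (ih (b-1) (by omega) (by omega)).support_nodup, List.nodup_singleton _, ?_⟩
    · simp only [List.mem_append, List.mem_singleton, kooh_support, pair_eq]
      push_neg
      refine ⟨by intro h1; omega, by simp⟩
    · intro x hx
      rw [kooh_support] at hx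
      simp only [List.mem_singleton, pair_eq]
      intro y ⟨h1, _⟩ hxy; subst hxy; omega

lemma kooh_edges (n : ℕ) : ∀ (b : ℕ) (hn : n ≤ b) (hb : b < k) (e : Sym2 (Fin k × Bool)),
    e ∈ (kooh n b hn hb).edges ↔
      ((∃ (i : ℕ) (hi : i+1 < k) (b' : Bool), b - n ≤ i ∧ i+1 ≤ b ∧ e = railE i hi b') ∨
       e = rungE (b-n) (by omega)) := by
  induction n with
  | zero =>
    intro b hn hb e
    simp only [kooh, Walk.edges_cons, Walk.edges_nil, List.mem_singleton, List.not_mem_nil,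
      or_false, List.mem_cons]
    constructor
    · intro he; right; rw [he]; congr 1
    · rintro (⟨i, hi, b', h1, h2, _⟩|he)
      · omega
      · rw [he]; congr 1
  | succ n ih =>
    intro b hn hb e
    simp only [kooh, Walk.edges_cons, Walk.edges_concat, List.concat_eq_append,
      List.mem_cons, List.mem_append, List.mem_singleton, List.not_mem_nil, or_false,
      ih (b-1) (by omega) (by omega)]
    constructor
    · rintro (he|(⟨i,hi,b',h1,h2,he⟩|he)|he)
      · refine Or.inl ⟨b-1, by omega, false, by omega, by omega, ?_⟩
        rw [he, railE, Sym2.eq_swap]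
        simp [Sym2.eq_iff, Prod.ext_iff, Fin.ext_iff]; omega
      · exact Or.inl ⟨i, hi, b', by omega, by omega, he⟩
      · right; rw [he]; congr 1; omega
      · refine Or.inl ⟨b-1, by omega, true, by omega, by omega, ?_⟩
        rw [he, railE]
        simp [Sym2.eq_iff, Prod.ext_iff, Fin.ext_iff]; omega
    · rintro (⟨i,hi,b',h1,h2,he⟩|he)
      · rcases Nat.eq_or_lt_of_le h2 with h2'|h2'
        · cases b'
          · left; rw [he, railE, Sym2.eq_swap]
            simp [Sym2.eq_iff, Prod.ext_iff, Fin.ext_iff]; omega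
          · right; right; rw [he, railE]
            simp [Sym2.eq_iff, Prod.ext_iff, Fin.ext_iff]; omega
        · right; left; left; exact ⟨i, hi, b', by omega, by omega, he⟩
      · right; left; right; rw [he]; congr 1; omega

lemma path_structure (L : ℕ) :
    ∀ (a : ℕ) (ha : a < k)
      (W : (Ladder k).Walk ((⟨a,ha⟩ : Fin k), false) ((⟨a,ha⟩ : Fin k), true)),
      W.length ≤ L → W.IsPath → (∀ x ∈ W.support, a ≤ (x.1:ℕ)) →
      ∃ (n : ℕ) (h : a + n < k), W = hook n a h := by
  induction L with
  | zero =>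
    intro a ha W hL hp hcol
    cases W with
    | cons hadj W' => simp [Walk.length_cons] at hL
  | succ L ihL =>
    intro a ha W hL hp hcol
    cases W with
    | cons hadj W' =>
      rename_i b
      rw [Walk.cons_isPath_iff] at hp
      obtain ⟨hp', hastart⟩ := hp
      have hbcol : a ≤ (b.1 : ℕ) := by
        apply hcol
        rw [Walk.support_cons]
        exact List.mem_cons_of_mem _ W'.start_mem_support
      have hbisLt := b.1.isLt
      have hadj' := ladder_adj.mp hadj
      have hb : b = ((⟨a,ha⟩ : Fin k), true) ∨
          ∃ h1 : a + 1 < k, b = ((⟨a+1,h1⟩ : Fin k), false) := by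
        rcases hadj' with ⟨h1, h2|h2⟩|⟨h1, h2⟩
        · simp only [Fin.val_mk] at h2
          right
          refine ⟨by omega, ?_⟩
          rw [pair_eq]
          exact ⟨by omega, h1.symm⟩
        · exfalso; simp only [Fin.val_mk] at h2; omega
        · left
          rw [pair_eq]
          refine ⟨(congrArg Fin.val h1).symm, ?_⟩
          revert h2; cases b.2 <;> simp
      rcases hb with hb | ⟨h1, hb⟩
      · subst hb
        have : W' = Walk.nil := Walk.isPath_iff_eq_nil.mp hp'
        subst this
        exact ⟨0, by omega, rfl⟩
      · subst hb
        -- peel the last edge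
        cases hR : W'.reverse with
        | cons h2 R' =>
          rename_i c
          have hRpath : W'.reverse.IsPath := hp'.reverse
          rw [hR, Walk.cons_isPath_iff] at hRpath
          obtain ⟨hR'path, hatR'⟩ := hRpath
          have hcR' : c ∈ R'.support := R'.start_mem_support
          have hcW' : c ∈ W'.support := by
            have : R'.support ⊆ W'.reverse.support := by
              rw [hR, Walk.support_cons]; exact List.subset_cons_self _ _
            rw [Walk.support_reverse] at this
            exact (List.mem_reverse).mp (this hcR')
          have hccol : a ≤ (c.1 : ℕ) := by
            apply hcol
            rw [Walk.support_cons]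
            exact List.mem_cons_of_mem _ hcW'
          have hcne : c ≠ ((⟨a,ha⟩ : Fin k), false) := fun h => hastart (h ▸ hcW')
          have hcne' : c ≠ ((⟨a,ha⟩ : Fin k), true) := fun h => hatR' (h ▸ hcR')
          have hcisLt := c.1.isLt
          have h2' := ladder_adj.mp h2
          have hc : c = ((⟨a+1,h1⟩ : Fin k), true) := by
            rcases h2' with ⟨g1, g2|g2⟩|⟨g1, g2⟩
            · simp only [Fin.val_mk] at g2
              rw [pair_eq]
              exact ⟨by omega, g1.symm⟩
            · exfalso; simp only [Fin.val_mk] at g2; omega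
            · exfalso
              apply hcne
              rw [pair_eq]
              refine ⟨(congrArg Fin.val g1).symm, ?_⟩
              revert g2; cases c.2 <;> simp
          subst hc
          -- the middle path
          have hMpath : R'.reverse.IsPath := hR'path.reverse
          have hMsup : ∀ x ∈ R'.reverse.support, a + 1 ≤ (x.1 : ℕ) := by
            intro x hx
            rw [Walk.support_reverse, List.mem_reverse] at hx
            have hxW' : x ∈ W'.support := by
              have : R'.support ⊆ W'.reverse.support := by
                rw [hR, Walk.support_cons]; exact List.subset_cons_self _ _
              rw [Walk.support_reverse] at this
              exact (List.mem_reverse).mp (this hx)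
            have hxcol : a ≤ (x.1 : ℕ) := by
              apply hcol
              rw [Walk.support_cons]
              exact List.mem_cons_of_mem _ hxW'
            rcases Nat.eq_or_lt_of_le hxcol with h|h
            · exfalso
              cases hx2 : x.2
              · exact hastart ((pair_eq.mpr ⟨h.symm, hx2⟩) ▸ hxW')
              · exact hatR' ((pair_eq.mpr ⟨h.symm, hx2⟩) ▸ hx)
            · omega
          have hMlen : R'.reverse.length ≤ L := by
            have l1 : W'.length ≤ L := by
              have := hL
              rw [Walk.length_cons] at this
              omega
            have l2 : W'.reverse.length = W'.length := Walk.length_reverse _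
            rw [hR, Walk.length_cons] at l2
            rw [Walk.length_reverse]
            omega
          obtain ⟨n, hn, hM⟩ := ihL (a+1) h1 R'.reverse hMlen hMpath hMsup
          refine ⟨n+1, by omega, ?_⟩
          have hW' : W' = (Walk.cons h2 R').reverse := by rw [← hR, Walk.reverse_reverse]
          rw [hW', Walk.reverse_cons, hM]
          simp only [hook, Walk.concat_eq_append]

lemma path_structure' (L : ℕ) :
    ∀ (b : ℕ) (hb : b < k)
      (W : (Ladder k).Walk ((⟨b,hb⟩ : Fin k), false) ((⟨b,hb⟩ : Fin k), true)),
      W.length ≤ L → W.IsPath → (∀ x ∈ W.support, (x.1:ℕ) ≤ b) →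
      ∃ (n : ℕ) (hn : n ≤ b), W = kooh n b hn hb := by
  induction L with
  | zero =>
    intro b hb W hL hp hcol
    cases W with
    | cons hadj W' => simp [Walk.length_cons] at hL
  | succ L ihL =>
    intro b hb W hL hp hcol
    cases W with
    | cons hadj W' =>
      rename_i c
      rw [Walk.cons_isPath_iff] at hp
      obtain ⟨hp', hastart⟩ := hp
      have hccol : (c.1 : ℕ) ≤ b := by
        apply hcol
        rw [Walk.support_cons]
        exact List.mem_cons_of_mem _ W'.start_mem_support
      have hadj' := ladder_adj.mp hadj
      have hc : c = ((⟨b,hb⟩ : Fin k), true) ∨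
          ∃ h1 : 1 ≤ b, c = ((⟨b-1, Nat.lt_of_le_of_lt (Nat.sub_le b 1) hb⟩ : Fin k), false) := by
        rcases hadj' with ⟨h1, h2|h2⟩|⟨h1, h2⟩
        · exfalso; simp only [Fin.val_mk] at h2; omega
        · simp only [Fin.val_mk] at h2
          right
          refine ⟨by omega, ?_⟩
          rw [pair_eq]
          exact ⟨by omega, h1.symm⟩
        · left
          rw [pair_eq]
          refine ⟨(congrArg Fin.val h1).symm, ?_⟩
          revert h2; cases c.2 <;> simp
      rcases hc with hc | ⟨h1, hc⟩
      · subst hc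
        have : W' = Walk.nil := Walk.isPath_iff_eq_nil.mp hp'
        subst this
        exact ⟨0, by omega, rfl⟩
      · subst hc
        obtain ⟨d, h2, R', hR⟩ := Walk.exists_eq_cons_of_ne
            (by simp [Prod.ext_iff] : ((⟨b,hb⟩ : Fin k), true) ≠ _) W'.reverse
        · have hRpath : W'.reverse.IsPath := hp'.reverse
          rw [hR, Walk.cons_isPath_iff] at hRpath
          obtain ⟨hR'path, hatR'⟩ := hRpath
          have hdR' : d ∈ R'.support := R'.start_mem_support
          have hdW' : d ∈ W'.support := by
            have : R'.support ⊆ W'.reverse.support := by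
              rw [hR, Walk.support_cons]; exact List.subset_cons_self _ _
            rw [Walk.support_reverse] at this
            exact (List.mem_reverse).mp (this hdR')
          have hdcol : (d.1 : ℕ) ≤ b := by
            apply hcol
            rw [Walk.support_cons]
            exact List.mem_cons_of_mem _ hdW'
          have hdne : d ≠ ((⟨b,hb⟩ : Fin k), false) := fun h => hastart (h ▸ hdW')
          have hdne' : d ≠ ((⟨b,hb⟩ : Fin k), true) := fun h => hatR' (h ▸ hdR')
          have h2' := ladder_adj.mp h2
          have hd : d = ((⟨b-1, Nat.lt_of_le_of_lt (Nat.sub_le b 1) hb⟩ : Fin k), true) := by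
            rcases h2' with ⟨g1, g2|g2⟩|⟨g1, g2⟩
            · exfalso; simp only [Fin.val_mk] at g2
              rcases Nat.eq_or_lt_of_le hdcol with h|h
              · exact hdne' (pair_eq.mpr ⟨h, by
                  revert g1; cases d.2 <;> simp⟩)
              · omega
            · simp only [Fin.val_mk] at g2
              rw [pair_eq]
              exact ⟨by omega, g1.symm⟩
            · exfalso
              apply hdne
              rw [pair_eq]
              refine ⟨(congrArg Fin.val g1).symm, ?_⟩
              revert g2; cases d.2 <;> simp
          subst hd
          have hMpath : R'.reverse.IsPath := hR'path.reverse
          have hMsup : ∀ x ∈ R'.reverse.support, (x.1 : ℕ) ≤ b - 1 := by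
            intro x hx
            rw [Walk.support_reverse, List.mem_reverse] at hx
            have hxW' : x ∈ W'.support := by
              have : R'.support ⊆ W'.reverse.support := by
                rw [hR, Walk.support_cons]; exact List.subset_cons_self _ _
              rw [Walk.support_reverse] at this
              exact (List.mem_reverse).mp (this hx)
            have hxcol : (x.1 : ℕ) ≤ b := by
              apply hcol
              rw [Walk.support_cons]
              exact List.mem_cons_of_mem _ hxW'
            rcases Nat.eq_or_lt_of_le hxcol with h|h
            · exfalso
              cases hx2 : x.2
              · exact hastart ((pair_eq.mpr ⟨h, hx2⟩) ▸ hxW')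
              · exact hatR' ((pair_eq.mpr ⟨h, hx2⟩) ▸ hx)
            · omega
          have hMlen : R'.reverse.length ≤ L := by
            have l1 : W'.length ≤ L := by
              have := hL
              rw [Walk.length_cons] at this
              omega
            have l2 : W'.reverse.length = W'.length := Walk.length_reverse _
            rw [hR, Walk.length_cons] at l2
            rw [Walk.length_reverse]
            omega
          obtain ⟨n, hn, hM⟩ := ihL (b-1) (by omega) R'.reverse hMlen hMpath hMsup
          refine ⟨n+1, by omega, ?_⟩
          have hW' : W' = (Walk.cons h2 R').reverse := by rw [← hR, Walk.reverse_reverse]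
          rw [hW', Walk.reverse_cons, hM]
          simp only [kooh, Walk.concat_eq_append]

lemma kooh_congr {n n' b : ℕ} (hn : n ≤ b) (hn' : n' ≤ b) (hb : b < k) (h : n = n') :
    kooh (k:=k) n b hn hb = kooh n' b hn' hb := by subst h; rfl

lemma rung_congr {i i' : ℕ} (hi : i < k) (hi' : i' < k) (h : i = i') :
    rungE (k:=k) i hi = rungE i' hi' := by subst h; rfl

lemma rail_eq_rail {i i' : ℕ} {hi : i+1 < k} {hi' : i'+1 < k} {b b' : Bool} :
    railE i hi b = railE i' hi' b' ↔ (i = i' ∧ b = b') := by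
  simp only [railE, Sym2.eq_iff, Prod.mk.injEq, Fin.mk.injEq]
  constructor
  · rintro (⟨⟨h1,h2⟩,h3,h4⟩|⟨⟨h1,h2⟩,h3,h4⟩)
    · exact ⟨h1, h2⟩
    · omega
  · rintro ⟨rfl, rfl⟩
    left; simp

lemma rail_ne_rung {i i' : ℕ} {hi : i+1 < k} {hi' : i' < k} {b : Bool} :
    railE i hi b ≠ rungE i' hi' := by
  intro he
  simp only [railE, rungE, Sym2.eq_iff, Prod.mk.injEq, Fin.mk.injEq] at he
  rcases he with ⟨⟨h1,h2⟩,h3,h4⟩|⟨⟨h1,h2⟩,h3,h4⟩ <;> simp_all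

lemma rung_eq_rung {i i' : ℕ} {hi : i < k} {hi' : i' < k} :
    rungE (k:=k) i hi = rungE i' hi' ↔ i = i' := by
  simp only [rungE, Sym2.eq_iff, Prod.mk.injEq, Fin.mk.injEq]
  constructor
  · rintro (⟨⟨h1,h2⟩,h3,h4⟩|⟨⟨h1,h2⟩,h3,h4⟩) <;> simp_all
  · rintro rfl; left; simp

def Hgraph (j : ℕ) (hj : j + 1 < k) : SimpleGraph (Fin k × Bool) :=
  SimpleGraph.fromEdgeSet
    ({e | e ∈ (hook j 0 (by omega)).edges} ∪
     {e | e ∈ (kooh (k-2-j) (k-1) (by omega) (by omega)).edges})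

lemma Hgraph_mem (j : ℕ) (hj : j + 1 < k) (h1 : 0 + j < k) (h2 : k-2-j ≤ k-1) (h3 : k-1 < k)
    (e : Sym2 (Fin k × Bool)) :
    e ∈ (Hgraph j hj).edgeSet ↔
      (e ∈ (hook j 0 h1).edges ∨ e ∈ (kooh (k-2-j) (k-1) h2 h3).edges) := by
  rw [Hgraph, edgeSet_fromEdgeSet]
  constructor
  · rintro ⟨he, -⟩; exact he
  · intro he
    refine ⟨he, ?_⟩
    rcases he with he|he
    · exact (Ladder k).not_isDiag_of_mem_edgeSet ((hook j 0 h1).edges_subset_edgeSet he)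
    · exact (Ladder k).not_isDiag_of_mem_edgeSet
        ((kooh (k-2-j) (k-1) h2 h3).edges_subset_edgeSet he)

lemma Hgraph_le (j : ℕ) (hj : j + 1 < k) : Hgraph j hj ≤ Ladder k := by
  intro v w h
  rw [Hgraph, fromEdgeSet_adj] at h
  rcases h.1 with he|he
  · exact (Ladder k).mem_edgeSet.mp (Walk.edges_subset_edgeSet _ he)
  · exact (Ladder k).mem_edgeSet.mp (Walk.edges_subset_edgeSet _ he)

lemma rung_mem_Hgraph (j : ℕ) (hj : j + 1 < k) (i : ℕ) (hi : i < k) :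
    rungE i hi ∈ (Hgraph j hj).edgeSet ↔ (i = j ∨ i = j + 1) := by
  rw [Hgraph_mem j hj (by omega) (by omega) (by omega), hook_edges, kooh_edges]
  constructor
  · rintro ((⟨i',hi',b,_,_,he⟩|he)|(⟨i',hi',b,_,_,he⟩|he))
    · exact absurd he.symm rail_ne_rung
    · left; have := rung_eq_rung.mp he; omega
    · exact absurd he.symm rail_ne_rung
    · right; have := rung_eq_rung.mp he; omega
  · rintro (rfl|rfl)
    · exact Or.inl (Or.inr (rung_congr _ _ (by omega)))
    · exact Or.inr (Or.inr (rung_congr _ _ (by omega)))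

lemma rail_mem_Hgraph (j : ℕ) (hj : j + 1 < k) (i : ℕ) (hi : i + 1 < k) (b : Bool) :
    railE i hi b ∈ (Hgraph j hj).edgeSet ↔ (i + 1 ≤ j ∨ (j + 1 ≤ i ∧ i + 1 ≤ k - 1)) := by
  rw [Hgraph_mem j hj (by omega) (by omega) (by omega), hook_edges, kooh_edges]
  constructor
  · rintro ((⟨i',hi',b',g1,g2,he⟩|he)|(⟨i',hi',b',g1,g2,he⟩|he))
    · have := (rail_eq_rail.mp he).1; omega
    · exact absurd he rail_ne_rung
    · have := (rail_eq_rail.mp he).1; omega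
    · exact absurd he rail_ne_rung
  · rintro (h|⟨h,h'⟩)
    · exact Or.inl (Or.inl ⟨i, hi, b, by omega, by omega, rfl⟩)
    · exact Or.inr (Or.inl ⟨i, hi, b, by omega, by omega, rfl⟩)

lemma Hgraph_isDecomp (hk0 : 0 < k) (j : ℕ) (hj : j + 1 < k) :
    IsTwoPathDecomposition k hk0 (Hgraph j hj) := by
  have h1 : 0 + j < k := by omega
  have h2 : k-2-j ≤ k-1 := by omega
  have h3 : k-1 < k := by omega
  have hpe : ∀ e ∈ (hook j 0 h1).edges, e ∈ (Hgraph j hj).edgeSet :=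
    fun e he => (Hgraph_mem j hj h1 h2 h3 e).mpr (Or.inl he)
  have hqe : ∀ e ∈ (kooh (k-2-j) (k-1) h2 h3).edges, e ∈ (Hgraph j hj).edgeSet :=
    fun e he => (Hgraph_mem j hj h1 h2 h3 e).mpr (Or.inr he)
  refine ⟨Hgraph_le j hj, (hook j 0 h1).transfer _ hpe,
    (kooh (k-2-j) (k-1) h2 h3).transfer _ hqe,
    (hook_isPath j 0 h1).transfer hpe, (kooh_isPath (k-2-j) (k-1) h2 h3).transfer hqe, ?_, ?_⟩
  · intro x
    rw [Walk.support_transfer, Walk.support_transfer, hook_support, kooh_support]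
    have := x.1.isLt
    omega
  · ext e
    simp only [Set.mem_union, Set.mem_setOf_eq, Walk.edges_transfer]
    exact Hgraph_mem j hj h1 h2 h3 e

lemma decomp_eq (hk2 : 2 ≤ k) (hk0 : 0 < k) (H : SimpleGraph (Fin k × Bool))
    (hH : IsTwoPathDecomposition k hk0 H) :
    ∃ (j : ℕ) (hj : j + 1 < k), H = Hgraph j hj := by
  obtain ⟨hle, p, q, hp, hq, hcov, hedge⟩ := hH
  have hpL : ∀ e ∈ p.edges, e ∈ (Ladder k).edgeSet :=
    fun e he => (edgeSet_mono hle) (p.edges_subset_edgeSet he)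
  have hqL : ∀ e ∈ q.edges, e ∈ (Ladder k).edgeSet :=
    fun e he => (edgeSet_mono hle) (q.edges_subset_edgeSet he)
  obtain ⟨n, hn, hP⟩ := path_structure (p.transfer (Ladder k) hpL).length 0 (by omega)
    (p.transfer (Ladder k) hpL) le_rfl (hp.transfer hpL) (fun x _ => Nat.zero_le _)
  obtain ⟨m, hm, hQ⟩ := path_structure' (q.transfer (Ladder k) hqL).length (k-1) (by omega)
    (q.transfer (Ladder k) hqL) le_rfl (hq.transfer hqL)
    (fun x _ => by have := x.1.isLt; omega)
  have hps : ∀ x : Fin k × Bool, x ∈ p.support ↔ (x.1:ℕ) ≤ n := by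
    intro x
    rw [← Walk.support_transfer p hpL, hP, hook_support]
    omega
  have hqs : ∀ x : Fin k × Bool, x ∈ q.support ↔ ((k-1)-m ≤ (x.1:ℕ) ∧ (x.1:ℕ) ≤ k-1) := by
    intro x
    rw [← Walk.support_transfer q hqL, hQ, kooh_support]
  -- n is below k-1
  have hkq : ((⟨k-1, by omega⟩ : Fin k), false) ∈ q.support := by
    rw [hqs]; simp
  have hkp : ¬ ((⟨k-1, by omega⟩ : Fin k), false) ∈ p.support :=
    fun h => (hcov _).mp h hkq
  rw [hps] at hkp
  simp only [Fin.val_mk] at hkp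
  have hn1 : n + 1 < k := by omega
  -- the switch position
  have hA : ((⟨n, by omega⟩ : Fin k), false) ∈ p.support := by rw [hps]
  have hA' := (hcov _).mp hA
  rw [hqs] at hA'
  simp only [Fin.val_mk] at hA'
  have hB : ((⟨n+1, hn1⟩ : Fin k), false) ∉ p.support := by rw [hps]; simp
  have hB' : ((⟨n+1, hn1⟩ : Fin k), false) ∈ q.support := by
    by_contra hq'
    exact hB ((hcov _).mpr hq')
  rw [hqs] at hB'
  simp only [Fin.val_mk] at hB'
  have hmn : m = k - 2 - n := by omega
  refine ⟨n, hn1, ?_⟩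
  have h1 : 0 + n < k := by omega
  have h2 : k-2-n ≤ k-1 := by omega
  have h3 : k-1 < k := by omega
  have hpe : p.edges = (hook n 0 h1).edges := by
    rw [← hP]
    exact (Walk.edges_transfer p hpL).symm
  have hqe : q.edges = (kooh (k-2-n) (k-1) h2 h3).edges := by
    rw [kooh_congr h2 (by omega) h3 hmn.symm, ← hQ]
    exact (Walk.edges_transfer q hqL).symm
  apply SimpleGraph.edgeSet_inj.mp
  rw [hedge]
  ext e
  rw [Set.mem_union, Set.mem_setOf_eq, Set.mem_setOf_eq, hpe, hqe,
    Hgraph_mem n hn1 h1 h2 h3 e]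

lemma Hgraph_inj {j j' : ℕ} (hj : j+1 < k) (hj' : j'+1 < k)
    (h : Hgraph j hj = Hgraph j' hj') : j = j' := by
  have m1 : rungE j (by omega) ∈ (Hgraph j hj).edgeSet :=
    (rung_mem_Hgraph j hj j (by omega)).mpr (Or.inl rfl)
  rw [h] at m1
  have e1 := (rung_mem_Hgraph j' hj' j (by omega)).mp m1
  have m2 : rungE j' (by omega) ∈ (Hgraph j' hj').edgeSet :=
    (rung_mem_Hgraph j' hj' j' (by omega)).mpr (Or.inl rfl)
  rw [← h] at m2
  have e2 := (rung_mem_Hgraph j hj j' (by omega)).mp m2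
  omega


/-- In the `k`-rung ladder there are exactly `k - 1` spanning subgraphs consisting of two
vertex-disjoint paths with endpoints `u_1, v_1` and `u_k, v_k` respectively; each of them
uses exactly two consecutive rungs. -/
theorem ladder_two_path_decompositions (k : ℕ) (hk : 2 ≤ k) :
    Nat.card {H : SimpleGraph (Fin k × Bool) //
        IsTwoPathDecomposition k (by omega) H} = k - 1 ∧
    (∀ H : SimpleGraph (Fin k × Bool), IsTwoPathDecomposition k (by omega) H →
      ∃ j j' : Fin k, (j : ℕ) + 1 = (j' : ℕ) ∧
        {e ∈ H.edgeSet | ∃ i : Fin k, e = s(((i, false) : Fin k × Bool), (i, true))} =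
          {s(((j, false) : Fin k × Bool), (j, true)),
           s(((j', false) : Fin k × Bool), (j', true))}) := by
  constructor
  · have hbij : Function.Bijective (fun j : Fin (k-1) =>
        (⟨Hgraph (j:ℕ) (by have := j.isLt; omega),
          Hgraph_isDecomp (by omega) (j:ℕ) (by have := j.isLt; omega)⟩ :
          {H : SimpleGraph (Fin k × Bool) // IsTwoPathDecomposition k (by omega) H})) := by
      constructor
      · intro j j' h
        simp only [Subtype.mk.injEq] at h
        exact Fin.ext (Hgraph_inj _ _ h)
      · rintro ⟨H, hH⟩
        obtain ⟨j, hj, rfl⟩ := decomp_eq hk (by omega) H hH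
        exact ⟨⟨j, by omega⟩, Subtype.ext rfl⟩
    have := Nat.card_eq_of_bijective _ hbij
    rw [← this, Nat.card_eq_fintype_card, Fintype.card_fin]
  · intro H hH
    obtain ⟨j, hj, rfl⟩ := decomp_eq hk (by omega) H hH
    refine ⟨⟨j, by omega⟩, ⟨j+1, hj⟩, by simp, ?_⟩
    ext e
    simp only [Set.mem_setOf_eq, Set.mem_insert_iff, Set.mem_singleton_iff]
    constructor
    · rintro ⟨he, i, rfl⟩
      have hm : rungE (i:ℕ) i.isLt ∈ (Hgraph j hj).edgeSet := he
      have hd := (rung_mem_Hgraph j hj (i:ℕ) i.isLt).mp hm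
      rcases hd with hd|hd
      · left; exact rung_congr i.isLt (by omega) hd
      · right; exact rung_congr i.isLt hj hd
    · rintro (rfl|rfl)
      · exact ⟨(rung_mem_Hgraph j hj j (by omega)).mpr (Or.inl rfl), ⟨j, by omega⟩, rfl⟩
      · exact ⟨(rung_mem_Hgraph j hj (j+1) hj).mpr (Or.inr rfl), ⟨j+1, hj⟩, rfl⟩
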